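/- For any finite nonempty set Γ ⊆ Σ and any a ∈ Γ: (a Γ^{η})^{ω} ≅ a Γ^{η} and (Γ^{η} a)^{\overline{ω}} ≅ Γ^{η} a. -/

import Mathlib

noncomputable section

open Order

namespace LSP

variable {α β S : Type*} [LinearOrder α] [LinearOrder β]

/-- A coloring all of whose colors from the palette `P` are dense, on an unbounded
nonempty order. -/
def DenseColoring (P : Set S) {γ : Type*} [LinearOrder γ] (c : γ → S) : Prop :=
  (∀ x, c x ∈ P) ∧ Nonempty γ ∧ (∀ x : γ, ∃ y, x < y) ∧ (∀ x : γ, ∃ y, y < x) ∧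
  ∀ x y : γ, x < y → ∀ s ∈ P, ∃ m, x < m ∧ m < y ∧ c m = s

theorem exists_between_finsets_c {P : Set S} {c : β → S} (H : DenseColoring P c)
    (lo hi : Finset β) (lo_lt_hi : ∀ x ∈ lo, ∀ y ∈ hi, x < y) {s : S} (hs : s ∈ P) :
    ∃ m : β, (∀ x ∈ lo, x < m) ∧ (∀ y ∈ hi, m < y) ∧ c m = s := by
  obtain ⟨hmem, ⟨x0⟩, hup, hdn, hbtw⟩ := H
  by_cases nlo : lo.Nonempty
  · by_cases nhi : hi.Nonempty
    · obtain ⟨m, h1, h2, h3⟩ :=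
        hbtw _ _ (lo_lt_hi _ (lo.max'_mem nlo) _ (hi.min'_mem nhi)) s hs
      exact ⟨m, fun x hx => (Finset.le_max' lo x hx).trans_lt h1,
        fun y hy => h2.trans_le (hi.min'_le y hy), h3⟩
    · obtain ⟨y, hy⟩ := hup (lo.max' nlo)
      obtain ⟨m, h1, _, h3⟩ := hbtw _ _ hy s hs
      exact ⟨m, fun x hx => (Finset.le_max' lo x hx).trans_lt h1,
        fun y hy => absurd ⟨y, hy⟩ nhi, h3⟩
  · by_cases nhi : hi.Nonempty
    · obtain ⟨y, hy⟩ := hdn (hi.min' nhi)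
      obtain ⟨m, _, h2, h3⟩ := hbtw _ _ hy s hs
      exact ⟨m, fun x hx => absurd ⟨x, hx⟩ nlo,
        fun z hz => h2.trans_le (hi.min'_le z hz), h3⟩
    · obtain ⟨y, hy⟩ := hup x0
      obtain ⟨m, _, _, h3⟩ := hbtw _ _ hy s hs
      exact ⟨m, fun x hx => absurd ⟨x, hx⟩ nlo, fun z hz => absurd ⟨z, hz⟩ nhi, h3⟩

/-- Color-preserving partial isomorphisms. -/
def CPI (cα : α → S) (cβ : β → S) : Type _ :=
  { f : Finset (α × β) // (∀ p ∈ f, cβ p.2 = cα p.1) ∧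
      ∀ p ∈ f, ∀ q ∈ f, cmp p.1 q.1 = cmp p.2 q.2 }

namespace CPI

variable {cα : α → S} {cβ : β → S}

instance : Inhabited (CPI cα cβ) :=
  ⟨⟨∅, ⟨fun _ h => absurd h (Finset.notMem_empty _),
    fun _ h => absurd h (Finset.notMem_empty _)⟩⟩⟩

instance : Preorder (CPI cα cβ) := Subtype.preorder _

theorem exists_across {P : Set S} (hcα : ∀ x, cα x ∈ P) (Hβ : DenseColoring P cβ)
    (f : CPI cα cβ) (x : α) :
    ∃ b : β, cβ b = cα x ∧ ∀ p ∈ f.val, cmp p.1 x = cmp p.2 b := by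
  by_cases h : ∃ b, (x, b) ∈ f.val
  · obtain ⟨b, hb⟩ := h
    exact ⟨b, f.prop.1 _ hb, fun p hp => f.prop.2 _ hp _ hb⟩
  · have key : ∀ u ∈ (f.val.filter fun p : α × β => p.1 < x).image Prod.snd,
        ∀ v ∈ (f.val.filter fun p : α × β => x < p.1).image Prod.snd, u < v := by
      intro u hu v hv
      rw [Finset.mem_image] at hu hv
      obtain ⟨p, hp, rfl⟩ := hu
      obtain ⟨q, hq, rfl⟩ := hv
      rw [Finset.mem_filter] at hp hq
      rw [← lt_iff_lt_of_cmp_eq_cmp (f.prop.2 _ hp.1 _ hq.1)]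
      exact hp.2.trans hq.2
    obtain ⟨b, hb1, hb2, hb3⟩ := exists_between_finsets_c Hβ _ _ key (hcα x)
    refine ⟨b, hb3, ?_⟩
    rintro ⟨p1, p2⟩ hp
    have hne : p1 ≠ x := fun he => h ⟨p2, he ▸ hp⟩
    rcases lt_or_gt_of_ne hne with hl | hr
    · have h2 : p2 < b :=
        hb1 _ (Finset.mem_image.mpr ⟨_, Finset.mem_filter.mpr ⟨hp, hl⟩, rfl⟩)
      exact ((cmp_eq_lt_iff _ _).mpr hl).trans ((cmp_eq_lt_iff _ _).mpr h2).symm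
    · have h2 : b < p2 :=
        hb2 _ (Finset.mem_image.mpr ⟨_, Finset.mem_filter.mpr ⟨hp, hr⟩, rfl⟩)
      exact ((cmp_eq_gt_iff _ _).mpr hr).trans ((cmp_eq_gt_iff _ _).mpr h2).symm

theorem exists_across' {P : Set S} (hcβ : ∀ y, cβ y ∈ P) (Hα : DenseColoring P cα)
    (f : CPI cα cβ) (y : β) :
    ∃ a : α, cα a = cβ y ∧ ∀ p ∈ f.val, cmp p.1 a = cmp p.2 y := by
  by_cases h : ∃ a, (a, y) ∈ f.val
  · obtain ⟨b, hb⟩ := h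
    exact ⟨b, (f.prop.1 _ hb).symm, fun p hp => f.prop.2 _ hp _ hb⟩
  · have key : ∀ u ∈ (f.val.filter fun p : α × β => p.2 < y).image Prod.fst,
        ∀ v ∈ (f.val.filter fun p : α × β => y < p.2).image Prod.fst, u < v := by
      intro u hu v hv
      rw [Finset.mem_image] at hu hv
      obtain ⟨p, hp, rfl⟩ := hu
      obtain ⟨q, hq, rfl⟩ := hv
      rw [Finset.mem_filter] at hp hq
      rw [lt_iff_lt_of_cmp_eq_cmp (f.prop.2 _ hp.1 _ hq.1)]
      exact hp.2.trans hq.2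
    obtain ⟨b, hb1, hb2, hb3⟩ := exists_between_finsets_c Hα _ _ key (hcβ y)
    refine ⟨b, hb3, ?_⟩
    rintro ⟨p1, p2⟩ hp
    have hne : p2 ≠ y := fun he => h ⟨p1, he ▸ hp⟩
    rcases lt_or_gt_of_ne hne with hl | hr
    · have h2 : p1 < b :=
        hb1 _ (Finset.mem_image.mpr ⟨_, Finset.mem_filter.mpr ⟨hp, hl⟩, rfl⟩)
      exact ((cmp_eq_lt_iff _ _).mpr h2).trans ((cmp_eq_lt_iff _ _).mpr hl).symm
    · have h2 : b < p1 :=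
        hb2 _ (Finset.mem_image.mpr ⟨_, Finset.mem_filter.mpr ⟨hp, hr⟩, rfl⟩)
      exact ((cmp_eq_gt_iff _ _).mpr h2).trans ((cmp_eq_gt_iff _ _).mpr hr).symm

def definedAtLeft {P : Set S} (hcα : ∀ x, cα x ∈ P) (Hβ : DenseColoring P cβ) (x : α) :
    Cofinal (CPI cα cβ) where
  carrier := {f | ∃ b, (x, b) ∈ f.val}
  isCofinal f := by
    obtain ⟨b, hbc, hb⟩ := exists_across hcα Hβ f x
    refine ⟨⟨insert (x, b) f.val, ?_, ?_⟩, ⟨b, Finset.mem_insert_self _ _⟩,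
      Finset.subset_insert _ _⟩
    · intro p hp
      rcases Finset.mem_insert.mp hp with rfl | hp
      · exact hbc
      · exact f.prop.1 _ hp
    · intro p hp q hq
      rcases Finset.mem_insert.mp hp with rfl | hp <;>
        rcases Finset.mem_insert.mp hq with rfl | hq
      · simp
      · rw [cmp_eq_cmp_symm]; exact hb _ hq
      · exact hb _ hp
      · exact f.prop.2 _ hp _ hq

def definedAtRight {P : Set S} (hcβ : ∀ y, cβ y ∈ P) (Hα : DenseColoring P cα) (y : β) :
    Cofinal (CPI cα cβ) where
  carrier := {f | ∃ a, (a, y) ∈ f.val}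
  isCofinal f := by
    obtain ⟨b, hbc, hb⟩ := exists_across' hcβ Hα f y
    refine ⟨⟨insert (b, y) f.val, ?_, ?_⟩, ⟨b, Finset.mem_insert_self _ _⟩,
      Finset.subset_insert _ _⟩
    · intro p hp
      rcases Finset.mem_insert.mp hp with rfl | hp
      · exact hbc.symm
      · exact f.prop.1 _ hp
    · intro p hp q hq
      rcases Finset.mem_insert.mp hp with rfl | hp <;>
        rcases Finset.mem_insert.mp hq with rfl | hq
      · simp
      · rw [cmp_eq_cmp_symm]; exact hb _ hq
      · exact hb _ hp
      · exact f.prop.2 _ hp _ hq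

end CPI

/-- Colored Cantor back-and-forth theorem. -/
theorem colored_iso [Countable α] [Countable β] (P : Set S)
    {cα : α → S} {cβ : β → S}
    (Hα : DenseColoring P cα) (Hβ : DenseColoring P cβ) :
    ∃ e : α ≃o β, ∀ x, cβ (e x) = cα x := by
  cases nonempty_encodable (α ⊕ β)
  let to_cofinal : α ⊕ β → Cofinal (CPI cα cβ) := fun p =>
    Sum.recOn p (CPI.definedAtLeft Hα.1 Hβ) (CPI.definedAtRight Hβ.1 Hα)
  let I := idealOfCofinals default to_cofinal
  have hF : ∀ x : α, ∃ b : β, ∃ f ∈ I, (x, b) ∈ f.val := by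
    intro x
    obtain ⟨f, ⟨b, hb⟩, hf⟩ := cofinal_meets_idealOfCofinals default to_cofinal (Sum.inl x)
    exact ⟨b, f, hf, hb⟩
  have hG : ∀ y : β, ∃ a : α, ∃ f ∈ I, (a, y) ∈ f.val := by
    intro y
    obtain ⟨f, ⟨b, hb⟩, hf⟩ := cofinal_meets_idealOfCofinals default to_cofinal (Sum.inr y)
    exact ⟨b, f, hf, hb⟩
  choose F hF' using hF
  choose G hG' using hG
  have key : ∀ x y, cmp x (G y) = cmp (F x) y := by
    intro x y
    obtain ⟨f, hf, hxf⟩ := hF' x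
    obtain ⟨g, hg, hyg⟩ := hG' y
    obtain ⟨m, _, fm, gm⟩ := I.directed _ hf _ hg
    exact m.prop.2 (x, F x) (fm hxf) (G y, y) (gm hyg)
  refine ⟨OrderIso.ofCmpEqCmp F G key, ?_⟩
  intro x
  obtain ⟨f, hf, hxf⟩ := hF' x
  exact f.prop.1 _ hxf



theorem extend_min (a0 : α) (b0 : β) (cα : α → S) (cβ : β → S)
    (ha0 : ∀ x, a0 ≤ x) (hb0 : ∀ y, b0 ≤ y) (hcol : cβ b0 = cα a0)
    (e : {x : α // a0 < x} ≃o {y : β // b0 < y})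
    (he : ∀ x, cβ (e x).val = cα x.val) :
    ∃ E : α ≃o β, ∀ x, cβ (E x) = cα x := by
  classical
  set f : α → β := fun x => if h : a0 < x then (e ⟨x, h⟩).val else b0 with hf
  have hmono : StrictMono f := by
    intro x y hxy
    by_cases hx : a0 < x
    · have hy : a0 < y := hx.trans hxy
      simp only [hf, dif_pos hx, dif_pos hy]
      exact e.strictMono (show (⟨x, hx⟩ : {x // a0 < x}) < ⟨y, hy⟩ from hxy)
    · have hx0 : x = a0 := le_antisymm (not_lt.mp hx) (ha0 x)
      have hy : a0 < y := hx0 ▸ hxy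
      simp only [hf, dif_neg hx, dif_pos hy]
      exact (e ⟨y, hy⟩).prop
  have hsurj : Function.Surjective f := by
    intro y
    by_cases hy : b0 < y
    · obtain ⟨x, hx⟩ := e.surjective ⟨y, hy⟩
      refine ⟨x.val, ?_⟩
      simp only [hf, dif_pos x.prop]
      rw [Subtype.coe_eta, hx]
    · refine ⟨a0, ?_⟩
      simp only [hf, dif_neg (lt_irrefl a0)]
      exact le_antisymm (hb0 y) (not_lt.mp hy)
  refine ⟨StrictMono.orderIsoOfSurjective f hmono hsurj, ?_⟩
  intro x
  show cβ (f x) = cα x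
  by_cases hx : a0 < x
  · simp only [hf, dif_pos hx]; exact he ⟨x, hx⟩
  · have hx0 : x = a0 := le_antisymm (not_lt.mp hx) (ha0 x)
    simp only [hf, hx0]
    rw [dif_neg (lt_irrefl a0), hcol]

theorem extend_max (a0 : α) (b0 : β) (cα : α → S) (cβ : β → S)
    (ha0 : ∀ x, x ≤ a0) (hb0 : ∀ y, y ≤ b0) (hcol : cβ b0 = cα a0)
    (e : {x : α // x < a0} ≃o {y : β // y < b0})
    (he : ∀ x, cβ (e x).val = cα x.val) :
    ∃ E : α ≃o β, ∀ x, cβ (E x) = cα x := by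
  classical
  set f : α → β := fun x => if h : x < a0 then (e ⟨x, h⟩).val else b0 with hf
  have hmono : StrictMono f := by
    intro x y hxy
    by_cases hy : y < a0
    · have hx : x < a0 := hxy.trans hy
      simp only [hf, dif_pos hx, dif_pos hy]
      exact e.strictMono (show (⟨x, hx⟩ : {x // x < a0}) < ⟨y, hy⟩ from hxy)
    · have hy0 : y = a0 := le_antisymm (ha0 y) (not_lt.mp hy)
      have hx : x < a0 := hy0 ▸ hxy
      simp only [hf, dif_pos hx, dif_neg hy]
      exact (e ⟨x, hx⟩).prop
  have hsurj : Function.Surjective f := by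
    intro y
    by_cases hy : y < b0
    · obtain ⟨x, hx⟩ := e.surjective ⟨y, hy⟩
      refine ⟨x.val, ?_⟩
      simp only [hf, dif_pos x.prop]
      rw [Subtype.coe_eta, hx]
    · refine ⟨a0, ?_⟩
      simp only [hf, dif_neg (lt_irrefl a0)]
      exact le_antisymm (not_lt.mp hy) (hb0 y)
  refine ⟨StrictMono.orderIsoOfSurjective f hmono hsurj, ?_⟩
  intro x
  show cβ (f x) = cα x
  by_cases hx : x < a0
  · simp only [hf, dif_pos hx]; exact he ⟨x, hx⟩
  · have hx0 : x = a0 := le_antisymm (ha0 x) (not_lt.mp hx)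
    simp only [hf, hx0]
    rw [dif_neg (lt_irrefl a0), hcol]

end LSP
/-- `c : ℚ → S` is the dense `Γ`-coloring of the rationals (the word `Γ^η`). -/
def GammaEta {S : Type*} (Γ : Finset S) (c : ℚ → S) : Prop :=
  (∀ x, c x ∈ Γ) ∧ ∀ q r : ℚ, q < r → ∀ a ∈ Γ, ∃ x : ℚ, q < x ∧ x < r ∧ c x = a

/-- Isomorphism of colored linear orders. -/
def ColoredIso {α β S : Type*} [LinearOrder α] [LinearOrder β]
    (cα : α → S) (cβ : β → S) : Prop :=
  ∃ e : α ≃o β, ∀ x, cβ (e x) = cα x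

/-- For finite nonempty `Γ` and `a ∈ Γ`: `(a Γ^η)^ω ≅ a Γ^η` and
`(Γ^η a)^{ω̄} ≅ Γ^η a`. Here `a Γ^η` is modeled on `Fin 1 ⊕ₗ ℚ` (one `a`-colored
point followed by `Γ^η`), its `ω`-power on `ℕ ×ₗ (Fin 1 ⊕ₗ ℚ)`; dually `Γ^η a`
on `ℚ ⊕ₗ Fin 1` and its `ω̄`-power on `ℕᵒᵈ ×ₗ (ℚ ⊕ₗ Fin 1)`. -/
theorem letter_shuffle_powers {S : Type*} (Γ : Finset S) (hΓ : Γ.Nonempty)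
    (a : S) (ha : a ∈ Γ)
    (d : ℕ → ℚ → S) (hd : ∀ n, GammaEta Γ (d n)) (c : ℚ → S) (hc : GammaEta Γ c)
    (d' : ℕᵒᵈ → ℚ → S) (hd' : ∀ n, GammaEta Γ (d' n)) (c' : ℚ → S) (hc' : GammaEta Γ c') :
    ColoredIso
      (fun x : ℕ ×ₗ (Fin 1 ⊕ₗ ℚ) =>
        Sum.elim (fun _ => a) (d (ofLex x).1) (ofLex (ofLex x).2))
      (fun y : Fin 1 ⊕ₗ ℚ => Sum.elim (fun _ => a) c (ofLex y)) ∧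
    ColoredIso
      (fun x : ℕᵒᵈ ×ₗ (ℚ ⊕ₗ Fin 1) =>
        Sum.elim (d' (ofLex x).1) (fun _ => a) (ofLex (ofLex x).2))
      (fun y : ℚ ⊕ₗ Fin 1 => Sum.elim c' (fun _ => a) (ofLex y)) := by
  constructor
  · -- Part 1: ω-power with bottom elements
    haveI : Countable (ℕ ×ₗ (Fin 1 ⊕ₗ ℚ)) := inferInstanceAs (Countable (ℕ × (Fin 1 ⊕ ℚ)))
    haveI : Countable (Fin 1 ⊕ₗ ℚ) := inferInstanceAs (Countable (Fin 1 ⊕ ℚ))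
    let cA : ℕ ×ₗ (Fin 1 ⊕ₗ ℚ) → S :=
      fun x => Sum.elim (fun _ => a) (d (ofLex x).1) (ofLex (ofLex x).2)
    let cB : (Fin 1 ⊕ₗ ℚ) → S := fun y => Sum.elim (fun _ => a) c (ofLex y)
    let a0 : ℕ ×ₗ (Fin 1 ⊕ₗ ℚ) := toLex (0, toLex (Sum.inl 0))
    let b0 : Fin 1 ⊕ₗ ℚ := toLex (Sum.inl 0)
    have ha0 : ∀ x, a0 ≤ x := by
      rintro ⟨n, z | q⟩
      · rcases Nat.eq_zero_or_pos n with rfl | hn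
        · have hz : z = 0 := Subsingleton.elim _ _
          subst hz; exact le_refl _
        · exact le_of_lt (Prod.Lex.left _ _ hn)
      · rcases Nat.eq_zero_or_pos n with rfl | hn
        · exact le_of_lt (Prod.Lex.right _ (Sum.Lex.sep _ _))
        · exact le_of_lt (Prod.Lex.left _ _ hn)
    have hb0 : ∀ y, b0 ≤ y := by
      rintro (z | q)
      · have hz : z = 0 := Subsingleton.elim _ _
        subst hz; exact le_refl _
      · exact le_of_lt (Sum.Lex.sep _ _)
    have HA : LSP.DenseColoring (↑Γ : Set S)
        (fun x : {x : ℕ ×ₗ (Fin 1 ⊕ₗ ℚ) // a0 < x} => cA x.val) := by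
      refine ⟨?_, ⟨⟨toLex (1, toLex (Sum.inl 0)), Prod.Lex.left _ _ Nat.zero_lt_one⟩⟩, ?_, ?_, ?_⟩
      · rintro ⟨⟨n, z | q⟩, hx⟩
        · exact ha
        · exact (hd n).1 q
      · -- no max
        rintro ⟨⟨n, u⟩, hx⟩
        exact ⟨⟨toLex (n + 1, toLex (Sum.inl 0)),
          hx.trans (Prod.Lex.left _ _ (Nat.lt_succ_self n))⟩,
          Prod.Lex.left _ _ (Nat.lt_succ_self n)⟩
      · -- no min
        rintro ⟨⟨n, z | q⟩, hx⟩
        · have hn : 0 < n := by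
            rcases Nat.eq_zero_or_pos n with rfl | hn
            · exfalso
              rw [Subsingleton.elim z (0 : Fin 1)] at hx
              exact lt_irrefl _ hx
            · exact hn
          refine ⟨⟨toLex (n - 1, toLex (Sum.inr 0)), ?_⟩, ?_⟩
          · rcases Nat.eq_zero_or_pos (n - 1) with he | hpos
            · rw [he]; exact Prod.Lex.right _ (Sum.Lex.sep _ _)
            · exact Prod.Lex.left _ _ hpos
          · exact Prod.Lex.left _ _ (by omega)
        · refine ⟨⟨toLex (n, toLex (Sum.inr (q - 1))), ?_⟩, ?_⟩
          · rcases Nat.eq_zero_or_pos n with rfl | hn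
            · exact Prod.Lex.right _ (Sum.Lex.sep _ _)
            · exact Prod.Lex.left _ _ hn
          · exact Prod.Lex.right _ (Sum.Lex.inr (by linarith))
      · -- density
        rintro ⟨⟨m, z | p⟩, hx⟩ ⟨⟨n, z' | q⟩, hy⟩ hxy s hs <;>
          rw [Finset.mem_coe] at hs <;> replace hxy := Subtype.mk_lt_mk.mp hxy <;>
          rcases hxy with ⟨_, _, hmn⟩ | ⟨_, huw⟩
        · -- (inl, inl), m < n
          obtain ⟨r, hr1, hr2, hr3⟩ := (hd m).2 0 1 (by norm_num) s hs
          have hlt : (toLex (m, toLex (Sum.inl z)) : ℕ ×ₗ (Fin 1 ⊕ₗ ℚ)) <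
              toLex (m, toLex (Sum.inr r)) := Prod.Lex.right _ (Sum.Lex.sep _ _)
          exact ⟨⟨toLex (m, toLex (Sum.inr r)), hx.trans hlt⟩, hlt,
            Prod.Lex.left _ _ hmn, hr3⟩
        · -- (inl, inl), same copy : impossible
          exact absurd huw (by rw [Subsingleton.elim z z']; exact lt_irrefl _)
        · -- (inl, inr), m < n
          obtain ⟨r, hr1, hr2, hr3⟩ := (hd m).2 0 1 (by norm_num) s hs
          have hlt : (toLex (m, toLex (Sum.inl z)) : ℕ ×ₗ (Fin 1 ⊕ₗ ℚ)) <
              toLex (m, toLex (Sum.inr r)) := Prod.Lex.right _ (Sum.Lex.sep _ _)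
          exact ⟨⟨toLex (m, toLex (Sum.inr r)), hx.trans hlt⟩, hlt,
            Prod.Lex.left _ _ hmn, hr3⟩
        · -- (inl, inr), same copy
          obtain ⟨r, hr1, hr2, hr3⟩ := (hd m).2 (q - 1) q (by linarith) s hs
          have hlt : (toLex (m, toLex (Sum.inl z)) : ℕ ×ₗ (Fin 1 ⊕ₗ ℚ)) <
              toLex (m, toLex (Sum.inr r)) := Prod.Lex.right _ (Sum.Lex.sep _ _)
          exact ⟨⟨toLex (m, toLex (Sum.inr r)), hx.trans hlt⟩, hlt,
            Prod.Lex.right _ (Sum.Lex.inr hr2), hr3⟩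
        · -- (inr, inl), m < n
          obtain ⟨r, hr1, hr2, hr3⟩ := (hd m).2 p (p + 1) (by linarith) s hs
          have hlt : (toLex (m, toLex (Sum.inr p)) : ℕ ×ₗ (Fin 1 ⊕ₗ ℚ)) <
              toLex (m, toLex (Sum.inr r)) := Prod.Lex.right _ (Sum.Lex.inr hr1)
          exact ⟨⟨toLex (m, toLex (Sum.inr r)), hx.trans hlt⟩, hlt,
            Prod.Lex.left _ _ hmn, hr3⟩
        · -- (inr, inl), same copy : impossible
          exact absurd huw Sum.Lex.not_inr_lt_inl
        · -- (inr, inr), m < n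
          obtain ⟨r, hr1, hr2, hr3⟩ := (hd m).2 p (p + 1) (by linarith) s hs
          have hlt : (toLex (m, toLex (Sum.inr p)) : ℕ ×ₗ (Fin 1 ⊕ₗ ℚ)) <
              toLex (m, toLex (Sum.inr r)) := Prod.Lex.right _ (Sum.Lex.inr hr1)
          exact ⟨⟨toLex (m, toLex (Sum.inr r)), hx.trans hlt⟩, hlt,
            Prod.Lex.left _ _ hmn, hr3⟩
        · -- (inr, inr), same copy
          have hpq : p < q := Sum.Lex.inr_lt_inr_iff.mp huw
          obtain ⟨r, hr1, hr2, hr3⟩ := (hd m).2 p q hpq s hs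
          have hlt : (toLex (m, toLex (Sum.inr p)) : ℕ ×ₗ (Fin 1 ⊕ₗ ℚ)) <
              toLex (m, toLex (Sum.inr r)) := Prod.Lex.right _ (Sum.Lex.inr hr1)
          exact ⟨⟨toLex (m, toLex (Sum.inr r)), hx.trans hlt⟩, hlt,
            Prod.Lex.right _ (Sum.Lex.inr hr2), hr3⟩
    have HB : LSP.DenseColoring (↑Γ : Set S)
        (fun y : {y : Fin 1 ⊕ₗ ℚ // b0 < y} => cB y.val) := by
      refine ⟨?_, ⟨⟨toLex (Sum.inr 0), Sum.Lex.sep _ _⟩⟩, ?_, ?_, ?_⟩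
      · rintro ⟨z | q, hy⟩
        · exact ha
        · exact hc.1 q
      · rintro ⟨z | q, hy⟩
        · exfalso; rw [Subsingleton.elim z (0 : Fin 1)] at hy; exact lt_irrefl _ hy
        · exact ⟨⟨toLex (Sum.inr (q + 1)), Sum.Lex.sep _ _⟩, Sum.Lex.inr (by linarith)⟩
      · rintro ⟨z | q, hy⟩
        · exfalso; rw [Subsingleton.elim z (0 : Fin 1)] at hy; exact lt_irrefl _ hy
        · exact ⟨⟨toLex (Sum.inr (q - 1)), Sum.Lex.sep _ _⟩, Sum.Lex.inr (by linarith)⟩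
      · rintro ⟨z | p, hx⟩ ⟨z' | q, hy⟩ hxy s hs
        · exfalso; rw [Subsingleton.elim z (0 : Fin 1)] at hx; exact lt_irrefl _ hx
        · exfalso; rw [Subsingleton.elim z (0 : Fin 1)] at hx; exact lt_irrefl _ hx
        · exfalso; rw [Subsingleton.elim z' (0 : Fin 1)] at hy; exact lt_irrefl _ hy
        · rw [Finset.mem_coe] at hs
          replace hxy := Subtype.mk_lt_mk.mp hxy
          have hpq : p < q := by
            rcases hxy with _ | h | _
            exact h
          obtain ⟨r, hr1, hr2, hr3⟩ := hc.2 p q hpq s hs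
          exact ⟨⟨toLex (Sum.inr r), Sum.Lex.sep _ _⟩,
            Sum.Lex.inr hr1, Sum.Lex.inr hr2, hr3⟩
    obtain ⟨e, he⟩ := LSP.colored_iso (↑Γ : Set S) HA HB
    exact LSP.extend_min a0 b0 cA cB ha0 hb0 rfl e he
  · -- Part 2: ω̄-power with top elements
    haveI : Countable (ℕᵒᵈ ×ₗ (ℚ ⊕ₗ Fin 1)) := inferInstanceAs (Countable (ℕ × (ℚ ⊕ Fin 1)))
    haveI : Countable (ℚ ⊕ₗ Fin 1) := inferInstanceAs (Countable (ℚ ⊕ Fin 1))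
    let cA : ℕᵒᵈ ×ₗ (ℚ ⊕ₗ Fin 1) → S :=
      fun x => Sum.elim (d' (ofLex x).1) (fun _ => a) (ofLex (ofLex x).2)
    let cB : (ℚ ⊕ₗ Fin 1) → S := fun y => Sum.elim c' (fun _ => a) (ofLex y)
    let a0 : ℕᵒᵈ ×ₗ (ℚ ⊕ₗ Fin 1) := toLex (OrderDual.toDual 0, toLex (Sum.inr 0))
    let b0 : ℚ ⊕ₗ Fin 1 := toLex (Sum.inr 0)
    have ha0 : ∀ x, x ≤ a0 := by
      rintro ⟨n, q | z⟩
      · rcases Nat.eq_zero_or_pos (OrderDual.ofDual n) with hn | hn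
        · have hn' : n = OrderDual.toDual 0 := hn
          rw [hn']
          exact le_of_lt (Prod.Lex.right _ (Sum.Lex.sep _ _))
        · exact le_of_lt (Prod.Lex.left _ _ (show (n : ℕᵒᵈ) < OrderDual.toDual 0 from hn))
      · rcases Nat.eq_zero_or_pos (OrderDual.ofDual n) with hn | hn
        · have hz : z = 0 := Subsingleton.elim _ _
          have hn' : n = OrderDual.toDual 0 := hn
          rw [hn', hz]
          exact le_refl _
        · exact le_of_lt (Prod.Lex.left _ _ (show (n : ℕᵒᵈ) < OrderDual.toDual 0 from hn))
    have hb0 : ∀ y, y ≤ b0 := by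
      rintro (q | z)
      · exact le_of_lt (Sum.Lex.sep _ _)
      · have hz : z = 0 := Subsingleton.elim _ _
        rw [hz]
        exact le_refl _
    have HA : LSP.DenseColoring (↑Γ : Set S)
        (fun x : {x : ℕᵒᵈ ×ₗ (ℚ ⊕ₗ Fin 1) // x < a0} => cA x.val) := by
      refine ⟨?_, ⟨⟨toLex (OrderDual.toDual 0, toLex (Sum.inl 0)),
        Prod.Lex.right _ (Sum.Lex.sep _ _)⟩⟩, ?_, ?_, ?_⟩
      · rintro ⟨⟨n, q | z⟩, hx⟩
        · exact (hd' n).1 q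
        · exact ha
      · -- no max within subtype
        rintro ⟨⟨n, q | z⟩, hx⟩
        · refine ⟨⟨toLex (n, toLex (Sum.inl (q + 1))), ?_⟩,
            Prod.Lex.right _ (Sum.Lex.inl (by linarith))⟩
          rcases Nat.eq_zero_or_pos (OrderDual.ofDual n) with hn | hn
          · have hn' : n = OrderDual.toDual 0 := hn
            rw [hn']
            exact Prod.Lex.right _ (Sum.Lex.sep _ _)
          · exact Prod.Lex.left _ _ (show (n : ℕᵒᵈ) < OrderDual.toDual 0 from hn)
        · -- u = inr z ; then 0 < n
          have hn : 0 < OrderDual.ofDual n := by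
            rcases Nat.eq_zero_or_pos (OrderDual.ofDual n) with hn | hn
            · exfalso
              rw [Subsingleton.elim z (0 : Fin 1)] at hx
              have hn' : n = OrderDual.toDual 0 := hn
              rw [hn'] at hx
              exact lt_irrefl _ hx
            · exact hn
          refine ⟨⟨toLex (OrderDual.toDual (OrderDual.ofDual n - 1), toLex (Sum.inl 0)),
            ?_⟩, ?_⟩
          · rcases Nat.eq_zero_or_pos (OrderDual.ofDual n - 1) with he | hpos
            · rw [he]
              exact Prod.Lex.right _ (Sum.Lex.sep _ _)
            · exact Prod.Lex.left _ _
                (show (OrderDual.toDual (OrderDual.ofDual n - 1) : ℕᵒᵈ) < OrderDual.toDual 0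
                  from hpos)
          · exact Prod.Lex.left _ _
              (show (n : ℕᵒᵈ) < OrderDual.toDual (OrderDual.ofDual n - 1) from by
                show OrderDual.ofDual n - 1 < OrderDual.ofDual n
                omega)
      · -- no min (unconstrained below)
        rintro ⟨⟨n, u⟩, hx⟩
        have hlt : (toLex (OrderDual.toDual (OrderDual.ofDual n + 1), toLex (Sum.inl 0)) :
            ℕᵒᵈ ×ₗ (ℚ ⊕ₗ Fin 1)) < toLex (n, u) :=
          Prod.Lex.left _ _
            (show (OrderDual.toDual (OrderDual.ofDual n + 1) : ℕᵒᵈ) < n from by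
              show OrderDual.ofDual n < OrderDual.ofDual n + 1
              omega)
        exact ⟨⟨toLex (OrderDual.toDual (OrderDual.ofDual n + 1), toLex (Sum.inl 0)),
          hlt.trans hx⟩, hlt⟩
      · -- density
        rintro ⟨⟨m, p | z⟩, hx⟩ ⟨⟨n, q | z'⟩, hy⟩ hxy s hs <;>
          rw [Finset.mem_coe] at hs <;> replace hxy := Subtype.mk_lt_mk.mp hxy <;>
          rcases hxy with ⟨_, _, hmn⟩ | ⟨_, huw⟩
        · -- (inl, inl), m < n in ℕᵒᵈ
          obtain ⟨r, hr1, hr2, hr3⟩ := (hd' n).2 (q - 1) q (by linarith) s hs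
          have hlt : (toLex (n, toLex (Sum.inl r)) : ℕᵒᵈ ×ₗ (ℚ ⊕ₗ Fin 1)) <
              toLex (n, toLex (Sum.inl q)) := Prod.Lex.right _ (Sum.Lex.inl hr2)
          exact ⟨⟨toLex (n, toLex (Sum.inl r)), hlt.trans hy⟩,
            Prod.Lex.left _ _ hmn, hlt, hr3⟩
        · -- (inl, inl), same copy
          have hpq : p < q := Sum.Lex.inl_lt_inl_iff.mp huw
          obtain ⟨r, hr1, hr2, hr3⟩ := (hd' m).2 p q hpq s hs
          have hlt : (toLex (m, toLex (Sum.inl r)) : ℕᵒᵈ ×ₗ (ℚ ⊕ₗ Fin 1)) <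
              toLex (m, toLex (Sum.inl q)) := Prod.Lex.right _ (Sum.Lex.inl hr2)
          exact ⟨⟨toLex (m, toLex (Sum.inl r)), hlt.trans hy⟩,
            Prod.Lex.right _ (Sum.Lex.inl hr1), hlt, hr3⟩
        · -- (inl, inr), m < n
          obtain ⟨r, hr1, hr2, hr3⟩ := (hd' n).2 0 1 (by norm_num) s hs
          have hlt : (toLex (n, toLex (Sum.inl r)) : ℕᵒᵈ ×ₗ (ℚ ⊕ₗ Fin 1)) <
              toLex (n, toLex (Sum.inr z')) := Prod.Lex.right _ (Sum.Lex.sep _ _)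
          exact ⟨⟨toLex (n, toLex (Sum.inl r)), hlt.trans hy⟩,
            Prod.Lex.left _ _ hmn, hlt, hr3⟩
        · -- (inl, inr), same copy
          obtain ⟨r, hr1, hr2, hr3⟩ := (hd' m).2 p (p + 1) (by linarith) s hs
          have hlt : (toLex (m, toLex (Sum.inl r)) : ℕᵒᵈ ×ₗ (ℚ ⊕ₗ Fin 1)) <
              toLex (m, toLex (Sum.inr z')) := Prod.Lex.right _ (Sum.Lex.sep _ _)
          exact ⟨⟨toLex (m, toLex (Sum.inl r)), hlt.trans hy⟩,
            Prod.Lex.right _ (Sum.Lex.inl hr1), hlt, hr3⟩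
        · -- (inr, inl), m < n
          obtain ⟨r, hr1, hr2, hr3⟩ := (hd' n).2 (q - 1) q (by linarith) s hs
          have hlt : (toLex (n, toLex (Sum.inl r)) : ℕᵒᵈ ×ₗ (ℚ ⊕ₗ Fin 1)) <
              toLex (n, toLex (Sum.inl q)) := Prod.Lex.right _ (Sum.Lex.inl hr2)
          exact ⟨⟨toLex (n, toLex (Sum.inl r)), hlt.trans hy⟩,
            Prod.Lex.left _ _ hmn, hlt, hr3⟩
        · -- (inr, inl), same copy : impossible
          exact absurd huw Sum.Lex.not_inr_lt_inl
        · -- (inr, inr), m < n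
          obtain ⟨r, hr1, hr2, hr3⟩ := (hd' n).2 0 1 (by norm_num) s hs
          have hlt : (toLex (n, toLex (Sum.inl r)) : ℕᵒᵈ ×ₗ (ℚ ⊕ₗ Fin 1)) <
              toLex (n, toLex (Sum.inr z')) := Prod.Lex.right _ (Sum.Lex.sep _ _)
          exact ⟨⟨toLex (n, toLex (Sum.inl r)), hlt.trans hy⟩,
            Prod.Lex.left _ _ hmn, hlt, hr3⟩
        · -- (inr, inr), same copy : impossible
          exact absurd huw (by rw [Subsingleton.elim z z']; exact lt_irrefl _)
    have HB : LSP.DenseColoring (↑Γ : Set S)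
        (fun y : {y : ℚ ⊕ₗ Fin 1 // y < b0} => cB y.val) := by
      refine ⟨?_, ⟨⟨toLex (Sum.inl 0), Sum.Lex.sep _ _⟩⟩, ?_, ?_, ?_⟩
      · rintro ⟨q | z, hy⟩
        · exact hc'.1 q
        · exact ha
      · rintro ⟨q | z, hy⟩
        · exact ⟨⟨toLex (Sum.inl (q + 1)), Sum.Lex.sep _ _⟩, Sum.Lex.inl (by linarith)⟩
        · exfalso; rw [Subsingleton.elim z (0 : Fin 1)] at hy; exact lt_irrefl _ hy
      · rintro ⟨q | z, hy⟩
        · exact ⟨⟨toLex (Sum.inl (q - 1)), Sum.Lex.sep _ _⟩, Sum.Lex.inl (by linarith)⟩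
        · exfalso; rw [Subsingleton.elim z (0 : Fin 1)] at hy; exact lt_irrefl _ hy
      · rintro ⟨p | z, hx⟩ ⟨q | z', hy⟩ hxy s hs
        · rw [Finset.mem_coe] at hs
          replace hxy := Subtype.mk_lt_mk.mp hxy
          have hpq : p < q := by
            rcases hxy with h | _ | _
            exact h
          obtain ⟨r, hr1, hr2, hr3⟩ := hc'.2 p q hpq s hs
          exact ⟨⟨toLex (Sum.inl r), Sum.Lex.sep _ _⟩,
            Sum.Lex.inl hr1, Sum.Lex.inl hr2, hr3⟩
        · exfalso; rw [Subsingleton.elim z' (0 : Fin 1)] at hy; exact lt_irrefl _ hy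
        · exfalso; rw [Subsingleton.elim z (0 : Fin 1)] at hx; exact lt_irrefl _ hx
        · exfalso; rw [Subsingleton.elim z (0 : Fin 1)] at hx; exact lt_irrefl _ hx
    obtain ⟨e, he⟩ := LSP.colored_iso (↑Γ : Set S) HA HB
    exact LSP.extend_max a0 b0 cA cB ha0 hb0 rfl e he
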